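/- Let d > 0, s > 0 and t ≥ 0. In ℓ²(ℕ) consider the ellipsoid E_s := { f ∈ ℓ²(ℕ) : Σ_{i∈ℕ} i^{2s/d} f_i² ≤ 1 } and the metric ρ₋t(f,g) := (Σ_{i∈ℕ} i^{−2t/d} (f_i − g_i)²)^{1/2}. For ε > 0 let N(ε) denote the minimal number of ρ₋t-balls of radius ε (with arbitrary centers) needed to cover E_s. Then there exist constants 0 < c ≤ C and ε₀ > 0 such that for all ε ∈ (0, ε₀): c · ε^{−d/(s+t)} ≤ log N(ε) ≤ C · ε^{−d/(s+t)}. -/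

import Mathlib

open scoped ENNReal

noncomputable section

/-- The Sobolev-type ellipsoid `E_s = {f ∈ ℓ² : Σ_i i^{2s/d} f_i² ≤ 1}` (in the `[0,∞]`-valued
form, with `1`-based weights). -/
def ellipsoid (d s : ℝ) : Set (ℕ → ℝ) :=
  {f | (∑' i : ℕ, ENNReal.ofReal (((i : ℝ) + 1) ^ (2 * s / d) * f i ^ 2)) ≤ 1}

/-- The negative-order distance `ρ_{−t}(f,g) = (Σ_i i^{−2t/d} (f_i − g_i)²)^{1/2} ∈ [0,∞]`. -/
def negDist (d t : ℝ) (f g : ℕ → ℝ) : ℝ≥0∞ :=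
  (∑' i : ℕ, ENNReal.ofReal (((i : ℝ) + 1) ^ (-(2 * t) / d) * (f i - g i) ^ 2)) ^ (1 / 2 : ℝ)

/-- `T` is an `ε`-cover of the ellipsoid `E_s` for the distance `ρ_{−t}`. -/
def IsCover (d s t ε : ℝ) (T : Finset (ℕ → ℝ)) : Prop :=
  ∀ f ∈ ellipsoid d s, ∃ g ∈ T, negDist d t f g ≤ ENNReal.ofReal ε

open MeasureTheory Metric Set Module

set_option maxHeartbeats 1000000

lemma norm_eq_sqrt_sum (m : ℕ) (y : EuclideanSpace ℝ (Fin m)) :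
    ‖y‖ = Real.sqrt (∑ i, (y i)^2) := by
  rw [EuclideanSpace.norm_eq]
  congr 1; apply Finset.sum_congr rfl; intro i _; rw [Real.norm_eq_abs, sq_abs]

lemma dist_sq_eq_sum (m : ℕ) (y z : EuclideanSpace ℝ (Fin m)) :
    dist y z ^ 2 = ∑ i, (y i - z i)^2 := by
  rw [EuclideanSpace.dist_eq, Real.sq_sqrt (by positivity)]
  apply Finset.sum_congr rfl; intro i _; rw [Real.dist_eq, sq_abs]

lemma vol_ellipsoid_le (m : ℕ) [NeZero m] (c : Fin m → ℝ) (hc : ∀ i, 0 < c i) :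
    volume {y : EuclideanSpace ℝ (Fin m) | ∑ i, (y i / c i)^2 ≤ 1}
      ≤ ENNReal.ofReal (∏ i, c i) * volume (ball (0:EuclideanSpace ℝ (Fin m)) 1) := by
  set L : EuclideanSpace ℝ (Fin m) →ₗ[ℝ] EuclideanSpace ℝ (Fin m) :=
    Matrix.toEuclideanLin (Matrix.diagonal c) with hL
  have hdet : LinearMap.det L = ∏ i, c i := by
    have h0 : LinearMap.det L
        = LinearMap.det (Matrix.toLin (PiLp.basisFun 2 ℝ (Fin m)) (PiLp.basisFun 2 ℝ (Fin m))
            (Matrix.diagonal c)) :=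
      rfl
    rw [h0, LinearMap.det_toLin, Matrix.det_diagonal]
  have hsub : {y : EuclideanSpace ℝ (Fin m) | ∑ i, (y i / c i)^2 ≤ 1}
      ⊆ L '' (closedBall 0 1) := by
    intro y hy
    set x : EuclideanSpace ℝ (Fin m) := WithLp.toLp 2 (fun i => y i / c i) with hx
    refine ⟨x, ?_, ?_⟩
    · rw [mem_closedBall, dist_zero_right, norm_eq_sqrt_sum]
      exact Real.sqrt_le_one.mpr hy
    · ext i
      show (Matrix.diagonal c).mulVec (WithLp.ofLp x) i = y i
      rw [Matrix.mulVec_diagonal]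
      have := (hc i).ne'
      show c i * (y i / c i) = y i
      field_simp
  calc volume {y : EuclideanSpace ℝ (Fin m) | ∑ i, (y i / c i)^2 ≤ 1}
      ≤ volume (L '' (closedBall 0 1)) := measure_mono hsub
    _ = ENNReal.ofReal |LinearMap.det L| * volume (closedBall (0:EuclideanSpace ℝ (Fin m)) 1) :=
        MeasureTheory.Measure.addHaar_image_linearMap _ L _
    _ ≤ ENNReal.ofReal (∏ i, c i) * volume (ball (0:EuclideanSpace ℝ (Fin m)) 1) := by
        rw [hdet, abs_of_pos (Finset.prod_pos fun i _ => hc i),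
          MeasureTheory.Measure.addHaar_closedBall _ _ zero_le_one, one_pow,
          ENNReal.ofReal_one, one_mul]

lemma card_le_of_separated (m : ℕ) [NeZero m] (a : Fin m → ℝ) (ha : ∀ i, 0 < a i)
    (r : ℝ) (hr : 0 < r) (S : Finset (EuclideanSpace ℝ (Fin m)))
    (hS : ∀ z ∈ S, ∑ i, (z i / a i)^2 ≤ 1)
    (hsep : ∀ z ∈ S, ∀ z' ∈ S, z ≠ z' → r < dist z z') :
    (S.card : ℝ) ≤ ∏ i, max (4 * a i / r) 2 := by
  set b : Fin m → ℝ := fun i => max (a i) (r/2) with hb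
  have hb0 : ∀ i, 0 < b i := fun i => lt_of_lt_of_le (ha i) (le_max_left _ _)
  set v := volume (ball (0:EuclideanSpace ℝ (Fin m)) 1) with hv
  have hvpos : v ≠ 0 := (measure_ball_pos _ _ one_pos).ne'
  have hvtop : v ≠ ⊤ := measure_ball_lt_top.ne
  have hrm : (0:ℝ) < (r/2)^m := by positivity
  -- disjoint balls
  have hdisj : (↑S : Set (EuclideanSpace ℝ (Fin m))).PairwiseDisjoint
      (fun z => ball z (r/2)) := by
    intro z hz z' hz' hne
    exact ball_disjoint_ball (by
      have := hsep z hz z' hz' hne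
      linarith)
  have hmeas := measure_biUnion_finset (μ := volume) hdisj (fun z _ => measurableSet_ball)
  -- union inside big ellipsoid
  have hsub : (⋃ z ∈ S, ball z (r/2))
      ⊆ {y : EuclideanSpace ℝ (Fin m) | ∑ i, (y i / (2 * b i))^2 ≤ 1} := by
    intro w hw
    simp only [mem_iUnion, exists_prop] at hw
    obtain ⟨z, hzS, hwz⟩ := hw
    have h1 : ∑ i, (w i / (2 * b i))^2
        ≤ (1/2) * ∑ i, (z i / b i)^2 + (1/2) * ∑ i, ((w i - z i) / b i)^2 := by
      rw [Finset.mul_sum, Finset.mul_sum, ← Finset.sum_add_distrib]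
      apply Finset.sum_le_sum
      intro i _
      have hbi := hb0 i
      have key : (w i)^2 ≤ 2 * (z i)^2 + 2 * (w i - z i)^2 := by
        nlinarith [sq_nonneg (z i - (w i - z i))]
      have e1 : (w i / (2 * b i))^2 = (w i)^2 / (4 * (b i)^2) := by
        rw [div_pow, mul_pow]; norm_num
      have e2 : (1:ℝ)/2 * (z i / b i)^2 = (z i)^2 / (2 * (b i)^2) := by
        rw [div_pow]; ring
      have e3 : (1:ℝ)/2 * ((w i - z i) / b i)^2 = (w i - z i)^2 / (2 * (b i)^2) := by
        rw [div_pow]; ring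
      have e4 : (z i)^2 / (2 * (b i)^2) + (w i - z i)^2 / (2 * (b i)^2)
          = (2 * (z i)^2 + 2 * (w i - z i)^2) / (4 * (b i)^2) := by
        field_simp; ring
      rw [e1, e2, e3, e4]
      exact (div_le_div_iff_of_pos_right (by positivity)).mpr key
    have h2 : ∑ i, (z i / b i)^2 ≤ 1 := by
      refine le_trans (Finset.sum_le_sum fun i _ => ?_) (hS z hzS)
      have hbi := hb0 i
      have hai := ha i
      rw [div_pow, div_pow]
      apply div_le_div_of_nonneg_left (sq_nonneg _) (by positivity)
      have : a i ≤ b i := le_max_left _ _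
      nlinarith
    have h3 : ∑ i, ((w i - z i) / b i)^2 ≤ 1 := by
      have hd : ∑ i, (w i - z i)^2 ≤ (r/2)^2 := by
        rw [← dist_sq_eq_sum]
        have := mem_ball.mp hwz
        nlinarith [dist_nonneg (x := w) (y := z)]
      calc ∑ i, ((w i - z i) / b i)^2 ≤ ∑ i, ((w i - z i) / (r/2))^2 := by
            apply Finset.sum_le_sum
            intro i _
            have hbi := hb0 i
            rw [div_pow, div_pow]
            apply div_le_div_of_nonneg_left (sq_nonneg _) (by positivity)
            have : r/2 ≤ b i := le_max_right _ _
            nlinarith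
        _ = (∑ i, (w i - z i)^2) / (r/2)^2 := by
            rw [Finset.sum_div]
            exact Finset.sum_congr rfl fun i _ => by rw [div_pow]
        _ ≤ 1 := by
            rw [div_le_one (by positivity)]
            exact hd
    show ∑ i, (w i / (2 * b i))^2 ≤ 1
    linarith
  -- volume chain
  have chain : (S.card : ℝ≥0∞) * (ENNReal.ofReal ((r/2)^m) * v)
      ≤ ENNReal.ofReal (∏ i, 2 * b i) * v := by
    calc (S.card : ℝ≥0∞) * (ENNReal.ofReal ((r/2)^m) * v)
        = ∑ z ∈ S, (ENNReal.ofReal ((r/2)^m) * v) := by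
          rw [Finset.sum_const, nsmul_eq_mul]
      _ = ∑ z ∈ S, volume (ball z (r/2)) := by
          refine Finset.sum_congr rfl fun z _ => ?_
          rw [Measure.addHaar_ball_of_pos _ z (by positivity : (0:ℝ) < r/2),
            finrank_euclideanSpace_fin]
      _ = volume (⋃ z ∈ S, ball z (r/2)) := hmeas.symm
      _ ≤ volume {y : EuclideanSpace ℝ (Fin m) | ∑ i, (y i / (2 * b i))^2 ≤ 1} :=
          measure_mono hsub
      _ ≤ ENNReal.ofReal (∏ i, 2 * b i) * v :=
          vol_ellipsoid_le m _ (fun i => by have := hb0 i; positivity)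
  -- cancel v and convert to ℝ
  have chain2 : ENNReal.ofReal ((S.card : ℝ) * (r/2)^m) ≤ ENNReal.ofReal (∏ i, 2 * b i) := by
    rw [ENNReal.ofReal_mul (by positivity), ENNReal.ofReal_natCast]
    rw [← ENNReal.mul_le_mul_iff_left hvpos hvtop]
    rw [mul_assoc]
    exact chain
  have hreal : (S.card : ℝ) * (r/2)^m ≤ ∏ i, 2 * b i :=
    (ENNReal.ofReal_le_ofReal_iff (Finset.prod_nonneg fun i _ => by have := hb0 i; positivity)).mp
      chain2
  have hfinal : (S.card : ℝ) ≤ (∏ i, 2 * b i) / (r/2)^m := by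
    rw [le_div_iff₀ hrm]; exact hreal
  refine hfinal.trans (le_of_eq ?_)
  have : ((r/2)^m : ℝ) = ∏ _i : Fin m, (r/2) := by
    rw [Finset.prod_const, Finset.card_univ, Fintype.card_fin]
  rw [this, ← Finset.prod_div_distrib]
  refine Finset.prod_congr rfl fun i _ => ?_
  have hbi := hb0 i
  show 2 * max (a i) (r/2) / (r/2) = max (4 * a i / r) 2
  rcases le_total (a i) (r/2) with h | h
  · rw [max_eq_right h, max_eq_right]
    · field_simp
    · rw [div_le_iff₀ hr]; nlinarith
  · rw [max_eq_left h, max_eq_left]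
    · field_simp; ring
    · rw [le_div_iff₀ hr]; nlinarith

lemma exists_net (m : ℕ) [NeZero m] (a : Fin m → ℝ) (ha : ∀ i, 0 < a i)
    (r : ℝ) (hr : 0 < r) :
    ∃ S : Finset (EuclideanSpace ℝ (Fin m)),
      (∀ y : EuclideanSpace ℝ (Fin m), (∑ i, (y i / a i)^2) ≤ 1 → ∃ z ∈ S, dist y z ≤ r) ∧
      (S.card : ℝ) ≤ ∏ i, max (4 * a i / r) 2 := by
  classical
  set B : ℝ := ∏ i, max (4 * a i / r) 2 with hB
  set N : ℕ := ⌊B⌋₊ with hN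
  set P : Finset (EuclideanSpace ℝ (Fin m)) → Prop := fun S =>
    (∀ z ∈ S, ∑ i, (z i / a i)^2 ≤ 1) ∧
    (∀ z ∈ S, ∀ z' ∈ S, z ≠ z' → r < dist z z') with hP
  have hcard : ∀ S, P S → S.card ≤ N := by
    intro S hPS
    exact Nat.le_floor (card_le_of_separated m a ha r hr S hPS.1 hPS.2)
  set pred : ℕ → Prop := fun k => ∃ S, P S ∧ S.card = k with hpred
  have h0 : pred 0 := ⟨∅, ⟨fun z hz => absurd hz (Finset.notMem_empty z),
    fun z hz => absurd hz (Finset.notMem_empty z)⟩, Finset.card_empty⟩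
  set n : ℕ := Nat.findGreatest pred N with hn
  obtain ⟨S, hPS, hcardS⟩ : pred n := Nat.findGreatest_spec (Nat.zero_le N) h0
  refine ⟨S, ?_, le_trans (by exact_mod_cast hcard S hPS) (Nat.floor_le (by
    rw [hB]; exact Finset.prod_nonneg fun i _ => le_trans (by norm_num) (le_max_right _ _)))⟩
  intro y hy
  by_contra hnot
  push_neg at hnot
  have hyS : y ∉ S := fun hyS => absurd (hnot y hyS) (by simp [dist_self]; positivity)
  have hPS' : P (insert y S) := by
    constructor
    · intro z hz
      rcases Finset.mem_insert.mp hz with rfl | hz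
      · exact hy
      · exact hPS.1 z hz
    · intro z hz z' hz' hne
      rcases Finset.mem_insert.mp hz with h1 | h1
      · rcases Finset.mem_insert.mp hz' with h2 | h2
        · exact absurd (h1.trans h2.symm) hne
        · rw [h1]; exact hnot z' h2
      · rcases Finset.mem_insert.mp hz' with h2 | h2
        · rw [h2, dist_comm]; exact hnot z h1
        · exact hPS.2 z h1 z' h2 hne
  have hc' : (insert y S).card = n + 1 := by
    rw [Finset.card_insert_of_notMem hyS, hcardS]
  have hle : n + 1 ≤ N := hc' ▸ hcard _ hPS'
  exact Nat.findGreatest_is_greatest (Nat.lt_succ_self n) hle ⟨insert y S, hPS', hc'⟩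

lemma card_ge_cover {X : Type*} (m : ℕ) [NeZero m] (rr RR : ℝ) (hrr : 0 < rr) (hRR : 0 < RR)
    (h4 : 4*RR ≤ rr) (T : Finset X) (π : X → EuclideanSpace ℝ (Fin m))
    (hcov : ball (0:EuclideanSpace ℝ (Fin m)) rr ⊆ ⋃ g ∈ T, ball (π g) (2*RR)) :
    (2:ℝ)^m ≤ (T.card:ℝ) := by
  set v := volume (ball (0:EuclideanSpace ℝ (Fin m)) 1) with hv
  have hvpos : v ≠ 0 := (measure_ball_pos _ _ one_pos).ne'
  have hvtop : v ≠ ⊤ := measure_ball_lt_top.ne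
  have hvol : ENNReal.ofReal (rr^m) * v ≤ (T.card : ℝ≥0∞) * (ENNReal.ofReal ((2*RR)^m) * v) := by
    calc ENNReal.ofReal (rr^m) * v
        = volume (ball (0:EuclideanSpace ℝ (Fin m)) rr) := by
          rw [Measure.addHaar_ball_of_pos _ _ hrr, finrank_euclideanSpace_fin]
      _ ≤ volume (⋃ g ∈ T, ball (π g) (2*RR)) := measure_mono hcov
      _ ≤ ∑ g ∈ T, volume (ball (π g) (2*RR)) := measure_biUnion_finset_le T _
      _ = (T.card : ℝ≥0∞) * (ENNReal.ofReal ((2*RR)^m) * v) := by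
          rw [Finset.sum_congr rfl (fun g _ => by
            rw [Measure.addHaar_ball_of_pos _ _ (by positivity : (0:ℝ) < 2*RR),
              finrank_euclideanSpace_fin])]
          rw [Finset.sum_const, nsmul_eq_mul]
  have hreal : rr^m ≤ (T.card:ℝ) * (2*RR)^m := by
    have h1 : ENNReal.ofReal (rr^m) ≤ ENNReal.ofReal ((T.card:ℝ) * (2*RR)^m) := by
      rw [ENNReal.ofReal_mul (by positivity), ENNReal.ofReal_natCast,
        ← ENNReal.mul_le_mul_iff_left hvpos hvtop, mul_assoc]
      exact hvol
    exact (ENNReal.ofReal_le_ofReal_iff (by positivity)).mp h1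
  have h1 : (2:ℝ)^m * (2*RR)^m ≤ (T.card:ℝ) * (2*RR)^m := by
    rw [← mul_pow]
    calc (2*(2*RR))^m ≤ rr^m := by
          apply pow_le_pow_left₀ (by positivity) (by linarith)
      _ ≤ (T.card:ℝ) * (2*RR)^m := hreal
  exact le_of_mul_le_mul_right h1 (by positivity)

lemma sum_log_ge (m : ℕ) :
    (m:ℝ) * Real.log m - m ≤ ∑ i ∈ Finset.range m, Real.log ((i:ℝ)+1) := by
  induction m with
  | zero => simp
  | succ n ih =>
    rw [Finset.sum_range_succ]
    have key : (n:ℝ) * Real.log ((n:ℝ)+1) - (n:ℝ) * Real.log n ≤ 1 := by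
      rcases Nat.eq_zero_or_pos n with rfl | hn
      · simp
      · have hn' : (0:ℝ) < n := by exact_mod_cast hn
        have h1 : Real.log (((n:ℝ)+1)/n) ≤ ((n:ℝ)+1)/n - 1 :=
          Real.log_le_sub_one_of_pos (by positivity)
        rw [Real.log_div (by positivity) (by positivity)] at h1
        have h2 : ((n:ℝ)+1)/n - 1 = 1/n := by field_simp; ring
        rw [h2] at h1
        have := mul_le_mul_of_nonneg_left h1 hn'.le
        calc (n:ℝ) * Real.log ((n:ℝ)+1) - (n:ℝ) * Real.log n
            = (n:ℝ) * (Real.log ((n:ℝ)+1) - Real.log n) := by ring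
          _ ≤ (n:ℝ) * (1/n) := this
          _ = 1 := by field_simp
    push_cast
    nlinarith [ih]

lemma ellipsoid_partial {d s : ℝ} {f : ℕ → ℝ} (hf : f ∈ ellipsoid d s) (m : ℕ) :
    ∑ i ∈ Finset.range m, ((i:ℝ)+1)^(2*s/d) * f i^2 ≤ 1 := by
  refine ENNReal.ofReal_le_one.mp ?_
  rw [ENNReal.ofReal_sum_of_nonneg (fun i _ => by positivity)]
  exact le_trans (ENNReal.sum_le_tsum _) hf

lemma negDist_le {d t ε : ℝ} (hε : 0 ≤ ε) {f g : ℕ → ℝ}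
    (h : (∑' i : ℕ, ENNReal.ofReal (((i:ℝ)+1)^(-(2*t)/d) * (f i - g i)^2))
      ≤ ENNReal.ofReal (ε^2)) :
    negDist d t f g ≤ ENNReal.ofReal ε := by
  have h2 := ENNReal.rpow_le_rpow h (by norm_num : (0:ℝ) ≤ 1/2)
  refine le_trans h2 ?_
  rw [ENNReal.ofReal_pow hε 2, ← ENNReal.rpow_natCast (ENNReal.ofReal ε) 2,
    ← ENNReal.rpow_mul]
  norm_num

lemma negDist_partial {d t ε : ℝ} (hε : 0 ≤ ε) {f g : ℕ → ℝ}
    (h : negDist d t f g ≤ ENNReal.ofReal ε) (m : ℕ) :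
    ∑ i ∈ Finset.range m, ((i:ℝ)+1)^(-(2*t)/d) * (f i - g i)^2 ≤ ε^2 := by
  have h1 : (∑' i : ℕ, ENNReal.ofReal (((i:ℝ)+1)^(-(2*t)/d) * (f i - g i)^2))
      ≤ ENNReal.ofReal (ε^2) := by
    have h2 := ENNReal.rpow_le_rpow h (by norm_num : (0:ℝ) ≤ 2)
    rw [negDist, ← ENNReal.rpow_mul] at h2
    norm_num at h2
    calc (∑' i : ℕ, ENNReal.ofReal (((i:ℝ)+1)^(-(2*t)/d) * (f i - g i)^2))
        ≤ (ENNReal.ofReal ε) ^ (2:ℕ) := h2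
      _ = ENNReal.ofReal (ε^2) := (ENNReal.ofReal_pow hε 2).symm
  refine (ENNReal.ofReal_le_ofReal_iff (by positivity)).mp ?_
  rw [ENNReal.ofReal_sum_of_nonneg (fun i _ => by positivity)]
  exact le_trans (ENNReal.sum_le_tsum _) h1

lemma tail_bound {d s t : ℝ} (hd : 0 < d) (hs : 0 < s) (ht : 0 ≤ t)
    {f : ℕ → ℝ} (hf : f ∈ ellipsoid d s) {m : ℕ} (hm : 0 < m) :
    (∑' i : ↑(((Finset.range m : Finset ℕ) : Set ℕ)ᶜ),
      ENNReal.ofReal (((i:ℝ)+1)^(-(2*t)/d) * (f i - 0)^2))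
      ≤ ENNReal.ofReal ((m:ℝ)^(-(2*(s+t))/d)) := by
  have hm' : (0:ℝ) < m := by exact_mod_cast hm
  have step : ∀ j : ↑(((Finset.range m : Finset ℕ) : Set ℕ)ᶜ),
      ENNReal.ofReal (((j:ℝ)+1)^(-(2*t)/d) * (f j - 0)^2)
        ≤ ENNReal.ofReal ((m:ℝ)^(-(2*(s+t))/d))
          * ENNReal.ofReal ((((j:ℕ):ℝ)+1)^(2*s/d) * f (j:ℕ)^2) := by
    rintro ⟨j, hj⟩
    simp only [Set.mem_compl_iff, Finset.coe_range, Set.mem_Iio, not_lt] at hj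
    have hj1 : (0:ℝ) < (j:ℝ) + 1 := by positivity
    have hsplit : ((j:ℝ)+1)^(-(2*t)/d) * (f j - 0)^2
        = ((j:ℝ)+1)^(-(2*(s+t))/d) * (((j:ℝ)+1)^(2*s/d) * f j^2) := by
      rw [sub_zero, ← mul_assoc, ← Real.rpow_add hj1]
      congr 2
      field_simp
      ring
    rw [hsplit, ENNReal.ofReal_mul (by positivity)]
    refine mul_le_mul_left (ENNReal.ofReal_le_ofReal ?_) _
    refine Real.rpow_le_rpow_of_nonpos hm' (by exact_mod_cast Nat.le_succ_of_le hj) ?_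
    have : 0 ≤ 2*(s+t) := by linarith
    rw [div_nonpos_iff]
    right; constructor <;> [linarith; linarith]
  calc (∑' i : ↑(((Finset.range m : Finset ℕ) : Set ℕ)ᶜ),
        ENNReal.ofReal (((i:ℝ)+1)^(-(2*t)/d) * (f i - 0)^2))
      ≤ ∑' i : ↑(((Finset.range m : Finset ℕ) : Set ℕ)ᶜ),
          ENNReal.ofReal ((m:ℝ)^(-(2*(s+t))/d))
            * ENNReal.ofReal ((((i:ℕ):ℝ)+1)^(2*s/d) * f (i:ℕ)^2) := Summable.tsum_le_tsum step ENNReal.summable ENNReal.summable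
    _ = ENNReal.ofReal ((m:ℝ)^(-(2*(s+t))/d)) * ∑' i : ↑(((Finset.range m : Finset ℕ) : Set ℕ)ᶜ),
          ENNReal.ofReal ((((i:ℕ):ℝ)+1)^(2*s/d) * f (i:ℕ)^2) := ENNReal.tsum_mul_left
    _ ≤ ENNReal.ofReal ((m:ℝ)^(-(2*(s+t))/d)) * 1 := by
        refine mul_le_mul_right ?_ _
        exact le_trans (ENNReal.tsum_comp_le_tsum_of_injective Subtype.val_injective _) hf
    _ = ENNReal.ofReal ((m:ℝ)^(-(2*(s+t))/d)) := mul_one _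

lemma lower_aux (d s t : ℝ) (hd : 0 < d) (hs : 0 < s) (ht : 0 ≤ t)
    (ε : ℝ) (hε : 0 < ε) (hx : 2 ≤ (1/(4*ε))^(d/(s+t)))
    (T : Finset (ℕ → ℝ)) (hT : IsCover d s t ε T) :
    Real.log 2 / 2 * (4:ℝ)^(-(d/(s+t))) * ε ^ (-(d/(s+t))) ≤ Real.log T.card := by
  classical
  have hst : 0 < s + t := by linarith
  set β : ℝ := d/(s+t) with hβ
  set α : ℝ := (s+t)/d with hα
  have hβ0 : 0 < β := by positivity
  have hα0 : 0 < α := by positivity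
  have hαβ : β * α = 1 := by rw [hβ, hα]; field_simp
  set x : ℝ := (1/(4*ε))^β with hxdef
  have hx0 : 0 < x := Real.rpow_pos_of_pos (by positivity) β
  set m : ℕ := ⌊x⌋₊ with hm
  have hm2 : 2 ≤ m := Nat.le_floor (by exact_mod_cast hx)
  have hm0 : 0 < m := by omega
  haveI : NeZero m := ⟨by omega⟩
  have hm0' : (0:ℝ) < m := by exact_mod_cast hm0
  have hmx : (m:ℝ) ≤ x := Nat.floor_le hx0.le
  have hxm : x/2 ≤ (m:ℝ) := by
    have h1 : x - 1 < (m:ℝ) := Nat.sub_one_lt_floor x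
    linarith
  have hma : (m:ℝ)^α ≤ 1/(4*ε) := by
    calc (m:ℝ)^α ≤ x^α := Real.rpow_le_rpow hm0'.le hmx hα0.le
      _ = (1/(4*ε))^(β*α) := by rw [hxdef, ← Real.rpow_mul (by positivity)]
      _ = 1/(4*ε) := by rw [hαβ, Real.rpow_one]
  set rr : ℝ := (m:ℝ)^(-(s/d)) with hrr
  set RR : ℝ := ε * (m:ℝ)^(t/d) with hRR
  have hrr0 : 0 < rr := Real.rpow_pos_of_pos hm0' _
  have hRR0 : 0 < RR := by
    have := Real.rpow_pos_of_pos hm0' (t/d); positivity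
  have key : 4 * RR ≤ rr := by
    have h1 : rr = (m:ℝ)^(-α) * (m:ℝ)^(t/d) := by
      rw [hrr, ← Real.rpow_add hm0']
      congr 1
      rw [hα]; field_simp; ring
    have h2 : 4*ε ≤ (m:ℝ)^(-α) := by
      rw [Real.rpow_neg hm0'.le]
      rw [le_inv_comm₀ (by positivity) (Real.rpow_pos_of_pos hm0' α)]
      calc (m:ℝ)^α ≤ 1/(4*ε) := hma
        _ = (4*ε)⁻¹ := one_div _
    rw [h1, hRR]
    have h3 : (0:ℝ) < (m:ℝ)^(t/d) := Real.rpow_pos_of_pos hm0' _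
    nlinarith
  -- projection
  set π : (ℕ → ℝ) → EuclideanSpace ℝ (Fin m) := fun g => WithLp.toLp 2 (fun i : Fin m => g i.val) with hπ
  -- covering of the euclidean ball
  have hcov : ball (0 : EuclideanSpace ℝ (Fin m)) rr ⊆ ⋃ g ∈ T, ball (π g) (2*RR) := by
    intro y hy
    set f : ℕ → ℝ := fun i => if h : i < m then y ⟨i, h⟩ else 0 with hf
    have hy' : ‖y‖ < rr := by rwa [mem_ball_zero_iff] at hy
    have hsumy : ∑ i : Fin m, (y i)^2 ≤ rr^2 := by
      have h1 : ‖y‖^2 = ∑ i : Fin m, (y i)^2 := by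
        rw [norm_eq_sqrt_sum, Real.sq_sqrt (by positivity)]
      nlinarith [norm_nonneg y]
    have hmem : f ∈ ellipsoid d s := by
      show (∑' i : ℕ, ENNReal.ofReal (((i : ℝ) + 1) ^ (2 * s / d) * f i ^ 2)) ≤ 1
      rw [tsum_eq_sum (s := Finset.range m) (by
        intro b hb
        have hb' : ¬ b < m := by simpa [Finset.mem_range] using hb
        rw [hf]
        simp [dif_neg hb'])]
      rw [← ENNReal.ofReal_sum_of_nonneg (fun i _ => by positivity)]
      refine ENNReal.ofReal_le_one.mpr ?_
      rw [← Fin.sum_univ_eq_sum_range (fun j => ((j:ℝ)+1)^(2*s/d) * (f j)^2) m]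
      have hterm : ∀ i : Fin m, (((i:ℕ):ℝ)+1)^(2*s/d) * (f i.val)^2
          ≤ (m:ℝ)^(2*s/d) * (y i)^2 := by
        intro i
        have hfi : f i.val = y i := by
          rw [hf]; simp [dif_pos i.isLt]
        rw [hfi]
        apply mul_le_mul_of_nonneg_right _ (sq_nonneg _)
        apply Real.rpow_le_rpow (by positivity) _ (by positivity)
        have := i.isLt
        exact_mod_cast Nat.succ_le_of_lt this
      calc ∑ i : Fin m, (((i:ℕ):ℝ)+1)^(2*s/d) * (f i.val)^2
          ≤ ∑ i : Fin m, (m:ℝ)^(2*s/d) * (y i)^2 := Finset.sum_le_sum fun i _ => hterm i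
        _ = (m:ℝ)^(2*s/d) * ∑ i : Fin m, (y i)^2 := by rw [Finset.mul_sum]
        _ ≤ (m:ℝ)^(2*s/d) * rr^2 := by
            apply mul_le_mul_of_nonneg_left hsumy (by positivity)
        _ = 1 := by
            have h9 : rr^(2:ℕ) = (m:ℝ)^(-(s/d) * ((2:ℕ):ℝ)) := by
              rw [hrr, ← Real.rpow_natCast ((m:ℝ)^(-(s/d))) 2, ← Real.rpow_mul hm0'.le]
            rw [h9, ← Real.rpow_add hm0']
            rw [show 2*s/d + -(s/d) * ((2:ℕ):ℝ) = 0 by push_cast; ring, Real.rpow_zero]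
    obtain ⟨g, hgT, hg⟩ := hT f hmem
    have hhead := negDist_partial hε.le hg m
    have hdist : dist y (π g) ≤ RR := by
      have h1 : dist y (π g)^2 = ∑ i : Fin m, (y i - π g i)^2 := dist_sq_eq_sum m y (π g)
      have h2 : ∑ i : Fin m, (y i - π g i)^2 ≤ (m:ℝ)^(2*t/d) * ε^2 := by
        have h3 : ∀ i : Fin m, (y i - π g i)^2
            ≤ (m:ℝ)^(2*t/d) * ((((i:ℕ):ℝ)+1)^(-(2*t)/d) * (f i.val - g i.val)^2) := by
          intro i
          have hfi : f i.val = y i := by rw [hf]; simp [dif_pos i.isLt]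
          have hb1 : (0:ℝ) < ((i:ℕ):ℝ)+1 := by positivity
          have hbm : (((i:ℕ):ℝ)+1) ≤ (m:ℝ) := by
            have := i.isLt; exact_mod_cast Nat.succ_le_of_lt this
          have e1 : (((i:ℕ):ℝ)+1)^(2*t/d) * (((i:ℕ):ℝ)+1)^(-(2*t)/d) = 1 := by
            rw [← Real.rpow_add hb1]
            rw [show 2*t/d + -(2*t)/d = 0 by ring, Real.rpow_zero]
          have e2 : (y i - π g i)^2
              = (((i:ℕ):ℝ)+1)^(2*t/d) * ((((i:ℕ):ℝ)+1)^(-(2*t)/d) * (f i.val - g i.val)^2) := by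
            rw [← mul_assoc, e1, one_mul, hfi, hπ]
          rw [e2]
          apply mul_le_mul_of_nonneg_right _ (by positivity)
          exact Real.rpow_le_rpow (by positivity) hbm (by positivity)
        calc ∑ i : Fin m, (y i - π g i)^2
            ≤ ∑ i : Fin m, (m:ℝ)^(2*t/d) * ((((i:ℕ):ℝ)+1)^(-(2*t)/d) * (f i.val - g i.val)^2) :=
              Finset.sum_le_sum fun i _ => h3 i
          _ = (m:ℝ)^(2*t/d) * ∑ i : Fin m, ((((i:ℕ):ℝ)+1)^(-(2*t)/d) * (f i.val - g i.val)^2) := by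
              rw [Finset.mul_sum]
          _ ≤ (m:ℝ)^(2*t/d) * ε^2 := by
              apply mul_le_mul_of_nonneg_left _ (by positivity)
              rw [Fin.sum_univ_eq_sum_range (fun j => ((j:ℝ)+1)^(-(2*t)/d) * (f j - g j)^2) m]
              exact hhead
      have hRRsq : (m:ℝ)^(2*t/d) * ε^2 = RR^2 := by
        rw [hRR, mul_pow, ← Real.rpow_natCast ((m:ℝ)^(t/d)) 2, ← Real.rpow_mul hm0'.le]
        rw [show (t/d) * ((2:ℕ):ℝ) = 2*t/d by push_cast; ring]
        ring
      nlinarith [dist_nonneg (x := y) (y := π g), sq_nonneg (dist y (π g))]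
    simp only [mem_iUnion, exists_prop]
    exact ⟨g, hgT, by rw [mem_ball]; linarith⟩
  have hcard2 : (2:ℝ)^m ≤ (T.card:ℝ) :=
    card_ge_cover m rr RR hrr0 hRR0 key T π hcov
  have hlog : (m:ℝ) * Real.log 2 ≤ Real.log T.card := by
    have := Real.log_le_log (by positivity : (0:ℝ) < 2^m) hcard2
    rwa [Real.log_pow] at this
  calc Real.log 2 / 2 * (4:ℝ)^(-(d/(s+t))) * ε ^ (-(d/(s+t)))
      = Real.log 2 / 2 * ((4:ℝ)^(-β) * ε^(-β)) := by rw [hβ]; ring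
    _ = Real.log 2 / 2 * x := by
        congr 1
        rw [hxdef, Real.rpow_neg (by norm_num : (0:ℝ) ≤ 4), Real.rpow_neg hε.le,
          one_div, Real.inv_rpow (by positivity), Real.mul_rpow (by norm_num) hε.le, mul_inv]
    _ ≤ Real.log 2 / 2 * (2 * m) := by
        apply mul_le_mul_of_nonneg_left (by linarith) (by positivity)
    _ = (m:ℝ) * Real.log 2 := by ring
    _ ≤ Real.log T.card := hlog

lemma upper_aux (d s t : ℝ) (hd : 0 < d) (hs : 0 < s) (ht : 0 ≤ t)
    (ε : ℝ) (hε : 0 < ε) (hε1 : ε < 1) :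
    ∃ T : Finset (ℕ → ℝ), IsCover d s t ε T ∧
      Real.log T.card ≤ (2 * 2^(d/(s+t)) * (Real.log 16 + (s+t)/d)) * ε ^ (-(d/(s+t))) := by
  classical
  have hst : 0 < s + t := by linarith
  set β : ℝ := d/(s+t) with hβ
  set α : ℝ := (s+t)/d with hα
  have hβ0 : 0 < β := by positivity
  have hα0 : 0 < α := by positivity
  have hβα : β * α = 1 := by rw [hβ, hα]; field_simp
  set x : ℝ := (2/ε)^β with hxdef
  have h2ε : 1 < 2/ε := by rw [lt_div_iff₀ hε]; linarith
  have hx0 : 0 < x := Real.rpow_pos_of_pos (by positivity) β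
  have hx1 : 1 ≤ x := by
    rw [hxdef]
    apply Real.one_le_rpow h2ε.le hβ0.le
  set m : ℕ := ⌈x⌉₊ with hm
  have hm1 : 1 ≤ m := Nat.one_le_ceil_iff.mpr hx0
  haveI : NeZero m := ⟨by omega⟩
  have hm0' : (0:ℝ) < m := by exact_mod_cast Nat.lt_of_lt_of_le Nat.zero_lt_one hm1
  have hm1r : (1:ℝ) ≤ (m:ℝ) := by exact_mod_cast hm1
  have hxm : x ≤ (m:ℝ) := Nat.le_ceil x
  have hmx : (m:ℝ) ≤ 2*x := by
    have h1 : (⌈x⌉₊:ℝ) < x + 1 := Nat.ceil_lt_add_one hx0.le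
    have : (m:ℝ) < x + 1 := h1
    linarith
  have hxα : x^α = 2/ε := by
    rw [hxdef, ← Real.rpow_mul (by positivity), hβα, Real.rpow_one]
  have hmα : 2/ε ≤ (m:ℝ)^α := by
    rw [← hxα]
    exact Real.rpow_le_rpow hx0.le hxm hα0.le
  have htail : ((m:ℝ))^(-(2*(s+t))/d) ≤ ε^2/4 := by
    have e1 : ((m:ℝ))^(-(2*(s+t))/d) = (((m:ℝ)^α)^2)⁻¹ := by
      rw [← Real.rpow_natCast ((m:ℝ)^α) 2, ← Real.rpow_mul hm0'.le,
        ← Real.rpow_neg hm0'.le]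
      congr 1
      rw [hα]; push_cast; ring
    have h5 : (2/ε)^2 ≤ ((m:ℝ)^α)^2 := by
      apply pow_le_pow_left₀ (by positivity) hmα
    have h6 : (((m:ℝ)^α)^2)⁻¹ ≤ ((2/ε)^2)⁻¹ := by
      apply inv_anti₀ (by positivity) h5
    have h7 : ((2/ε)^2)⁻¹ = ε^2/4 := by
      rw [div_pow, inv_div]
      norm_num
    rw [e1]; linarith
  set a : Fin m → ℝ := fun i => (((i:ℕ):ℝ)+1)^(-α) with ha
  have ha0 : ∀ i, 0 < a i := fun i => Real.rpow_pos_of_pos (by positivity) _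
  obtain ⟨S, hnet, hScard⟩ := exists_net m a ha0 (ε/2) (by positivity)
  set ext : EuclideanSpace ℝ (Fin m) → (ℕ → ℝ) :=
    fun z => fun i => if h : i < m then ((i:ℝ)+1)^(t/d) * z ⟨i,h⟩ else 0 with hext
  refine ⟨S.image ext, ?_, ?_⟩
  · -- cover property
    intro f hf
    set y : EuclideanSpace ℝ (Fin m) := WithLp.toLp 2 (fun i : Fin m => (((i:ℕ):ℝ)+1)^(-(t/d)) * f i.val) with hy
    have hy1 : ∑ i : Fin m, (y i / a i)^2 ≤ 1 := by
      have e : ∀ i : Fin m, (y i / a i)^2 = (((i:ℕ):ℝ)+1)^(2*s/d) * (f i.val)^2 := by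
        intro i
        have hb : (0:ℝ) < ((i:ℕ):ℝ)+1 := by positivity
        have e1 : y i / a i = (((i:ℕ):ℝ)+1)^(s/d) * f i.val := by
          show (((i:ℕ):ℝ)+1)^(-(t/d)) * f i.val / (((i:ℕ):ℝ)+1)^(-α)
            = (((i:ℕ):ℝ)+1)^(s/d) * f i.val
          rw [mul_div_right_comm, ← Real.rpow_sub hb]
          congr 2
          rw [hα]; field_simp; ring
        rw [e1, mul_pow, ← Real.rpow_natCast ((((i:ℕ):ℝ)+1)^(s/d)) 2,
          ← Real.rpow_mul hb.le,
          show (s/d) * ((2:ℕ):ℝ) = 2*s/d by push_cast; ring]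
      rw [Finset.sum_congr rfl (fun i _ => e i),
        Fin.sum_univ_eq_sum_range (fun j => ((j:ℝ)+1)^(2*s/d) * (f j)^2) m]
      exact ellipsoid_partial hf m
    obtain ⟨z, hzS, hdz⟩ := hnet y hy1
    refine ⟨ext z, Finset.mem_image_of_mem ext hzS, ?_⟩
    apply negDist_le hε.le
    rw [← Summable.tsum_add_tsum_compl (s := ((Finset.range m : Finset ℕ) : Set ℕ))
      ENNReal.summable ENNReal.summable]
    have hhead : (∑' i : ↑((Finset.range m : Finset ℕ) : Set ℕ),
        ENNReal.ofReal ((((i:ℕ):ℝ)+1)^(-(2*t)/d) * (f i - ext z i)^2))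
          ≤ ENNReal.ofReal (ε^2/2) := by
      rw [Finset.tsum_subtype' (Finset.range m)
        (fun i => ENNReal.ofReal (((i:ℝ)+1)^(-(2*t)/d) * (f i - ext z i)^2))]
      rw [← ENNReal.ofReal_sum_of_nonneg (fun i _ => by positivity)]
      apply ENNReal.ofReal_le_ofReal
      rw [← Fin.sum_univ_eq_sum_range (fun j => ((j:ℝ)+1)^(-(2*t)/d) * (f j - ext z j)^2) m]
      have e2 : ∀ i : Fin m,
          (((i:ℕ):ℝ)+1)^(-(2*t)/d) * (f i.val - ext z i.val)^2 = (y i - z i)^2 := by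
        intro i
        have hb : (0:ℝ) < ((i:ℕ):ℝ)+1 := by positivity
        have hlt := i.isLt
        have hev : ext z i.val = (((i:ℕ):ℝ)+1)^(t/d) * z i := by
          rw [hext]; simp [dif_pos hlt]
        rw [hev]
        have e3 : f i.val - (((i:ℕ):ℝ)+1)^(t/d) * z i
            = (((i:ℕ):ℝ)+1)^(t/d) * ((((i:ℕ):ℝ)+1)^(-(t/d)) * f i.val - z i) := by
          rw [mul_sub, ← mul_assoc, ← Real.rpow_add hb,
            show t/d + -(t/d) = 0 by ring, Real.rpow_zero, one_mul]
        rw [e3, mul_pow, ← mul_assoc, ← Real.rpow_natCast ((((i:ℕ):ℝ)+1)^(t/d)) 2,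
          ← Real.rpow_mul hb.le, ← Real.rpow_add hb,
          show -(2*t)/d + (t/d) * ((2:ℕ):ℝ) = 0 by push_cast; ring,
          Real.rpow_zero, one_mul, hy]
      rw [Finset.sum_congr rfl (fun i _ => e2 i), ← dist_sq_eq_sum m y z]
      nlinarith [dist_nonneg (x := y) (y := z), hdz, hε.le]
    have htail2 : (∑' i : ↑(((Finset.range m : Finset ℕ) : Set ℕ)ᶜ),
        ENNReal.ofReal ((((i:ℕ):ℝ)+1)^(-(2*t)/d) * (f i - ext z i)^2))
          ≤ ENNReal.ofReal (ε^2/2) := by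
      have e4 : ∀ i : ↑(((Finset.range m : Finset ℕ) : Set ℕ)ᶜ),
          ENNReal.ofReal ((((i:ℕ):ℝ)+1)^(-(2*t)/d) * (f i - ext z i)^2)
            = ENNReal.ofReal ((((i:ℕ):ℝ)+1)^(-(2*t)/d) * (f i - 0)^2) := by
        rintro ⟨j, hj⟩
        simp only [Set.mem_compl_iff, Finset.coe_range, Set.mem_Iio, not_lt] at hj
        have hz0 : ext z j = 0 := by rw [hext]; simp [dif_neg (not_lt.mpr hj)]
        rw [hz0]
      rw [tsum_congr e4]
      refine le_trans (tail_bound hd hs ht hf (by omega : 0 < m))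
        (ENNReal.ofReal_le_ofReal ?_)
      have : ε^2/4 ≤ ε^2/2 := by nlinarith [sq_nonneg ε]
      linarith [htail]
    refine le_trans (add_le_add hhead htail2) ?_
    rw [← ENNReal.ofReal_add (by positivity) (by positivity)]
    apply ENNReal.ofReal_le_ofReal
    nlinarith [sq_nonneg ε]
  · -- cardinality bound
    set P : ℝ := ∏ i : Fin m, max (4 * a i / (ε/2)) 2 with hP
    set γ : ℝ := α * Real.log m + Real.log (ε/2) with hγ
    have hγ0 : 0 ≤ γ := by
      have h1 : Real.log (2/ε) ≤ Real.log ((m:ℝ)^α) :=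
        Real.log_le_log (by positivity) hmα
      rw [Real.log_rpow hm0'] at h1
      have h2 : Real.log (2/ε) = - Real.log (ε/2) := by
        rw [← Real.log_inv]
        congr 1
        rw [inv_div]
      rw [h2] at h1
      rw [hγ]; linarith
    have hlogP : Real.log P ≤ (m:ℝ) * (Real.log 16 + α) := by
      have hterm : ∀ i : Fin m, Real.log (max (4 * a i / (ε/2)) 2)
          ≤ (Real.log 2 + Real.log 4 - Real.log (ε/2) + γ)
            - α * Real.log (((i:ℕ):ℝ)+1) := by
        intro i
        have hb : (0:ℝ) < ((i:ℕ):ℝ)+1 := by positivity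
        have hbm : (((i:ℕ):ℝ)+1) ≤ (m:ℝ) := by
          have := i.isLt; exact_mod_cast Nat.succ_le_of_lt this
        have hA : 0 < 4 * a i / (ε/2) := by
          have := ha0 i; positivity
        have hlogA : Real.log (4 * a i / (ε/2))
            = Real.log 4 - α * Real.log (((i:ℕ):ℝ)+1) - Real.log (ε/2) := by
          rw [Real.log_div (by positivity) (by positivity),
            Real.log_mul (by norm_num) (ne_of_gt (ha0 i)), ha]
          show Real.log 4 + Real.log ((((i:ℕ):ℝ)+1)^(-α)) - Real.log (ε/2) = _
          rw [Real.log_rpow hb]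
          ring
        have hkey : 0 ≤ Real.log (4 * a i / (ε/2)) + γ := by
          rw [hlogA, hγ]
          have h5 : Real.log (((i:ℕ):ℝ)+1) ≤ Real.log m := Real.log_le_log hb hbm
          have h6 : 0 ≤ α * (Real.log m - Real.log (((i:ℕ):ℝ)+1)) :=
            mul_nonneg hα0.le (by linarith)
          have h7 : (0:ℝ) ≤ Real.log 4 := Real.log_nonneg (by norm_num)
          nlinarith
        rcases le_total (4 * a i / (ε/2)) 2 with hc | hc
        · rw [max_eq_right hc]
          have : Real.log 2 ≤ Real.log 2 + (Real.log (4 * a i / (ε/2)) + γ) := by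
            linarith [hkey]
          calc Real.log 2 ≤ Real.log 2 + (Real.log (4 * a i / (ε/2)) + γ) := this
            _ = (Real.log 2 + Real.log 4 - Real.log (ε/2) + γ)
                - α * Real.log (((i:ℕ):ℝ)+1) := by rw [hlogA]; ring
        · rw [max_eq_left hc]
          have h8 : (0:ℝ) ≤ Real.log 2 := Real.log_nonneg (by norm_num)
          calc Real.log (4 * a i / (ε/2))
              ≤ Real.log (4 * a i / (ε/2)) + (Real.log 2 + γ) :=
                le_add_of_nonneg_right (add_nonneg h8 hγ0)
            _ = Real.log 2 + (Real.log (4 * a i / (ε/2)) + γ) := by ring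
            _ = (Real.log 2 + Real.log 4 - Real.log (ε/2) + γ)
                - α * Real.log (((i:ℕ):ℝ)+1) := by rw [hlogA]; ring
      have hlogprod : Real.log P = ∑ i : Fin m, Real.log (max (4 * a i / (ε/2)) 2) := by
        rw [hP]
        apply Real.log_prod
        intro i _
        have : (0:ℝ) < max (4 * a i / (ε/2)) 2 :=
          lt_of_lt_of_le two_pos (le_max_right _ _)
        exact this.ne'
      have hsum2 : ∑ i : Fin m, ((Real.log 2 + Real.log 4 - Real.log (ε/2) + γ)
            - α * Real.log (((i:ℕ):ℝ)+1))
          = (m:ℝ) * (Real.log 2 + Real.log 4 - Real.log (ε/2) + γ)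
            - α * ∑ i ∈ Finset.range m, Real.log ((i:ℝ)+1) := by
        rw [Finset.sum_sub_distrib, Finset.sum_const, Finset.card_univ, Fintype.card_fin,
          nsmul_eq_mul, ← Finset.mul_sum,
          Fin.sum_univ_eq_sum_range (fun j => Real.log ((j:ℝ)+1)) m]
      have hfinal : (m:ℝ) * (Real.log 2 + Real.log 4 - Real.log (ε/2) + γ)
            - α * ∑ i ∈ Finset.range m, Real.log ((i:ℝ)+1)
          ≤ (m:ℝ) * (Real.log 16 + α) := by
        have hγe : γ - Real.log (ε/2) = α * Real.log m := by rw [hγ]; ring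
        have hstir := sum_log_ge m
        have h9 : α * ((m:ℝ) * Real.log m - ∑ i ∈ Finset.range m, Real.log ((i:ℝ)+1))
            ≤ α * (m:ℝ) := by
          apply mul_le_mul_of_nonneg_left _ hα0.le
          linarith
        have h10 : Real.log 2 + Real.log 4 ≤ Real.log 16 := by
          rw [← Real.log_mul (by norm_num) (by norm_num)]
          apply Real.log_le_log (by norm_num)
          norm_num
        nlinarith [hm0']
      calc Real.log P = ∑ i : Fin m, Real.log (max (4 * a i / (ε/2)) 2) := hlogprod
        _ ≤ ∑ i : Fin m, ((Real.log 2 + Real.log 4 - Real.log (ε/2) + γ)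
              - α * Real.log (((i:ℕ):ℝ)+1)) := Finset.sum_le_sum fun i _ => hterm i
        _ = _ := hsum2
        _ ≤ (m:ℝ) * (Real.log 16 + α) := hfinal
    have hTlog : Real.log ((S.image ext).card) ≤ (m:ℝ) * (Real.log 16 + α) := by
      have hRHS : 0 ≤ (m:ℝ) * (Real.log 16 + α) :=
        mul_nonneg hm0'.le (add_nonneg (Real.log_nonneg (by norm_num)) hα0.le)
      rcases Nat.eq_zero_or_pos (S.image ext).card with h0 | h0
      · rw [h0]; simpa using hRHS
      · have hle : ((S.image ext).card:ℝ) ≤ P := by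
          calc ((S.image ext).card:ℝ) ≤ (S.card:ℝ) := by
                exact_mod_cast Finset.card_image_le
            _ ≤ P := hScard
        calc Real.log ((S.image ext).card)
            ≤ Real.log P := Real.log_le_log (by exact_mod_cast h0) hle
          _ ≤ (m:ℝ) * (Real.log 16 + α) := hlogP
    have hK0 : 0 ≤ Real.log 16 + α := add_nonneg (Real.log_nonneg (by norm_num)) hα0.le
    calc Real.log ((S.image ext).card) ≤ (m:ℝ) * (Real.log 16 + α) := hTlog
      _ ≤ (2*x) * (Real.log 16 + α) := mul_le_mul_of_nonneg_right hmx hK0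
      _ = (2 * 2^β * (Real.log 16 + α)) * ε^(-β) := by
          rw [hxdef, Real.div_rpow (by norm_num) hε.le, Real.rpow_neg hε.le, div_eq_mul_inv]
          ring

/-- **Metric entropy of Sobolev-type ellipsoids** (Lemma B.1):
`log N(ε, E_s, ρ_{−t}) ≍ ε^{−d/(s+t)}` as `ε → 0`. -/
theorem ellipsoid_metric_entropy
    (d s t : ℝ) (hd : 0 < d) (hs : 0 < s) (ht : 0 ≤ t) :
    ∃ c C ε₀ : ℝ, 0 < c ∧ c ≤ C ∧ 0 < ε₀ ∧ ∀ ε : ℝ, 0 < ε → ε < ε₀ →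
      (∃ T : Finset (ℕ → ℝ), IsCover d s t ε T ∧
        Real.log T.card ≤ C * ε ^ (-(d / (s + t)))) ∧
      (∀ T : Finset (ℕ → ℝ), IsCover d s t ε T →
        c * ε ^ (-(d / (s + t))) ≤ Real.log T.card) := by
  have hst : 0 < s + t := by linarith
  have hd0 : d ≠ 0 := ne_of_gt hd
  have hst0 : s + t ≠ 0 := ne_of_gt hst
  have hc₀ : 0 < Real.log 2 / 2 * (4:ℝ)^(-(d/(s+t))) := by
    have h1 : 0 < Real.log 2 := Real.log_pos (by norm_num)
    have h2 : 0 < (4:ℝ)^(-(d/(s+t))) := Real.rpow_pos_of_pos (by norm_num) _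
    positivity
  have hC₀ : 0 < 2 * 2^(d/(s+t)) * (Real.log 16 + (s+t)/d) := by
    have h1 : 0 < (2:ℝ)^(d/(s+t)) := Real.rpow_pos_of_pos two_pos _
    have h2 : 0 < Real.log 16 := Real.log_pos (by norm_num)
    have h3 : 0 < (s+t)/d := by positivity
    positivity
  have h2α : (0:ℝ) < (2:ℝ)^((s+t)/d) := Real.rpow_pos_of_pos two_pos _
  refine ⟨min (Real.log 2 / 2 * (4:ℝ)^(-(d/(s+t)))) (2 * 2^(d/(s+t)) * (Real.log 16 + (s+t)/d)),
    max (Real.log 2 / 2 * (4:ℝ)^(-(d/(s+t)))) (2 * 2^(d/(s+t)) * (Real.log 16 + (s+t)/d)),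
    min 1 (1/(4*(2:ℝ)^((s+t)/d))),
    lt_min hc₀ hC₀, (min_le_left _ _).trans (le_max_left _ _),
    lt_min one_pos (by positivity), ?_⟩
  intro ε hε hεlt
  have hε1 : ε < 1 := lt_of_lt_of_le hεlt (min_le_left _ _)
  have hε2 : ε < 1/(4*(2:ℝ)^((s+t)/d)) := lt_of_lt_of_le hεlt (min_le_right _ _)
  have hεβ : 0 ≤ ε^(-(d/(s+t))) := Real.rpow_nonneg hε.le _
  constructor
  · obtain ⟨T, hT, hlog⟩ := upper_aux d s t hd hs ht ε hε hε1
    exact ⟨T, hT, le_trans hlog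
      (mul_le_mul_of_nonneg_right (le_max_right _ _) hεβ)⟩
  · intro T hT
    have hx : 2 ≤ (1/(4*ε))^(d/(s+t)) := by
      have h1 : (2:ℝ)^((s+t)/d) ≤ 1/(4*ε) := by
        rw [le_div_iff₀ (by positivity)]
        rw [lt_div_iff₀ (by positivity)] at hε2
        nlinarith
      calc (2:ℝ) = ((2:ℝ)^((s+t)/d))^(d/(s+t)) := by
            rw [← Real.rpow_mul (by norm_num),
              show (s+t)/d * (d/(s+t)) = 1 by field_simp, Real.rpow_one]
        _ ≤ (1/(4*ε))^(d/(s+t)) := Real.rpow_le_rpow h2α.le h1 (by positivity)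
    have hlow := lower_aux d s t hd hs ht ε hε hx T hT
    calc min (Real.log 2 / 2 * (4:ℝ)^(-(d/(s+t)))) (2 * 2^(d/(s+t)) * (Real.log 16 + (s+t)/d))
          * ε^(-(d/(s+t)))
        ≤ (Real.log 2 / 2 * (4:ℝ)^(-(d/(s+t)))) * ε^(-(d/(s+t))) :=
          mul_le_mul_of_nonneg_right (min_le_left _ _) hεβ
      _ = Real.log 2 / 2 * (4:ℝ)^(-(d/(s+t))) * ε^(-(d/(s+t))) := by ring
      _ ≤ Real.log T.card := hlow

end
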